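/- Pólya enumeration theorem: let X = {x_1,...,x_r} be a finite set of colors and G ≤ S_n. For each orbit of G on X^n, recording the multiset of colors used, let N_{(k_1,...,k_r)} be the number of orbits using color x_i exactly k_i times. Then Σ N_{(k_1,...,k_r)} t_1^{k_1}···t_r^{k_r} = Z_G(p_1, p_2, ..., p_n), where p_j = t_1^j + ... + t_r^j is the j-th power sum and Z_G is the cycle index of G. -/

import Mathlib

open MvPolynomial

def cycleCount {n : ℕ} (g : Equiv.Perm (Fin n)) (r : ℕ) : ℕ :=
  if r = 1 then (Finset.univ.filter fun i => g i = i).card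
  else Multiset.count r g.cycleType

/-- `S_n` acts on `X^n = (Fin n → X)` by permuting coordinates: `(g • x) i = x (g⁻¹ i)`. -/
instance permArrowAction {n : ℕ} {X : Type*} : MulAction (Equiv.Perm (Fin n)) (Fin n → X) where
  smul g x := x ∘ ⇑g⁻¹
  one_smul x := by
    show x ∘ ⇑(1 : Equiv.Perm (Fin n))⁻¹ = x
    funext i; simp
  mul_smul g h x := by
    show x ∘ ⇑(g * h)⁻¹ = (x ∘ ⇑h⁻¹) ∘ ⇑g⁻¹
    funext i; simp [mul_inv_rev, Function.comp, Equiv.Perm.mul_apply]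

section PolyaAux
open Finset Equiv Equiv.Perm

lemma burnside {α : Type*} [Fintype α] {G : Type*} [Group G] [Fintype G]
    [MulAction G α] {M : Type*} [AddCommMonoid M] [Module ℚ M]
    [Fintype (Quotient (MulAction.orbitRel G α))]
    [DecidableEq α] (w : α → M) (hw : ∀ (g : G) (x : α), w (g • x) = w x) :
    (∑ g : G, ∑ x ∈ univ.filter (fun x => g • x = x), w x)
      = (Nat.card G : ℚ) • ∑ c : Quotient (MulAction.orbitRel G α), w c.out := by
  classical
  have hstab : ∀ x : α, Nat.card (MulAction.stabilizer G x)
      = (univ.filter fun g : G => g • x = x).card := by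
    intro x
    rw [Nat.card_eq_fintype_card]
    rw [Fintype.card_congr (Equiv.subtypeEquivRight (fun g => MulAction.mem_stabilizer_iff))]
    exact Fintype.card_subtype _
  have horb : ∀ x : α, Nat.card (MulAction.orbit G x)
      = (univ.filter fun y => (⟦y⟧ : Quotient (MulAction.orbitRel G α)) = ⟦x⟧).card := by
    intro x
    rw [Nat.card_eq_fintype_card]
    have : ∀ y : α, (⟦y⟧ : Quotient (MulAction.orbitRel G α)) = ⟦x⟧ ↔
        y ∈ MulAction.orbit G x := fun y =>
      (Quotient.eq (r := MulAction.orbitRel G α)).trans (MulAction.orbitRel_apply (G := G))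
    rw [Fintype.card_congr (Equiv.subtypeEquivRight fun y => (this y).symm)]
    exact Fintype.card_subtype _
  have h1 : (∑ g : G, ∑ x ∈ univ.filter (fun x => g • x = x), w x)
      = ∑ x : α, ((Nat.card (MulAction.stabilizer G x) : ℚ)) • w x := by
    simp_rw [Finset.sum_filter]
    rw [Finset.sum_comm]
    refine Finset.sum_congr rfl fun x _ => ?_
    rw [← Finset.sum_filter, Finset.sum_const, hstab x, Nat.cast_smul_eq_nsmul]
  rw [h1, ← Finset.sum_fiberwise univ (fun x => (⟦x⟧ : Quotient (MulAction.orbitRel G α)))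
      (fun x => ((Nat.card (MulAction.stabilizer G x) : ℚ)) • w x)]
  rw [Finset.smul_sum]
  refine Finset.sum_congr rfl fun c _ => ?_
  set fib := univ.filter fun x => (⟦x⟧ : Quotient (MulAction.orbitRel G α)) = c with hfib
  have hout : c.out ∈ fib := by simp [hfib]
  have hcardpos : 0 < fib.card := Finset.card_pos.2 ⟨_, hout⟩
  have hw' : ∀ x ∈ fib, w x = w c.out := by
    intro x hx
    simp only [hfib, mem_filter] at hx
    have : (⟦x⟧ : Quotient (MulAction.orbitRel G α)) = ⟦c.out⟧ := by rw [hx.2, Quotient.out_eq]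
    rw [Quotient.eq] at this
    obtain ⟨g, hg⟩ := (MulAction.orbitRel_apply (G := G)).mp this
    rw [← hg, hw]
  have hstab' : ∀ x ∈ fib, (Nat.card (MulAction.stabilizer G x) : ℚ)
      = (Nat.card G : ℚ) / fib.card := by
    intro x hx
    simp only [hfib, mem_filter] at hx
    have h2 := MulAction.card_orbit_mul_card_stabilizer_eq_card_group G x
    rw [← Nat.card_eq_fintype_card, ← Nat.card_eq_fintype_card, ← Nat.card_eq_fintype_card,
      horb x] at h2
    have : (univ.filter fun y => (⟦y⟧ : Quotient (MulAction.orbitRel G α)) = ⟦x⟧) = fib := by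
      simp only [hfib, hx.2]
    rw [this] at h2
    have hne : (fib.card : ℚ) ≠ 0 := Nat.cast_ne_zero.2 hcardpos.ne'
    rw [eq_div_iff hne, mul_comm]
    exact_mod_cast h2
  calc ∑ x ∈ fib, ((Nat.card (MulAction.stabilizer G x) : ℚ)) • w x
      = ∑ _x ∈ fib, ((Nat.card G : ℚ) / fib.card) • w c.out := by
        refine Finset.sum_congr rfl fun x hx => ?_
        rw [hw' x hx, hstab' x hx]
    _ = (Nat.card G : ℚ) • w c.out := by
        rw [Finset.sum_const, ← Nat.cast_smul_eq_nsmul ℚ, smul_smul]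
        congr 1
        field_simp

variable {n r : ℕ}

instance scDecEq (g : Equiv.Perm (Fin n)) :
    DecidableEq (Quotient (Equiv.Perm.SameCycle.setoid g)) := fun a b =>
  Quotient.recOnSubsingleton₂ a b fun x y =>
    decidable_of_iff (g.SameCycle x y) (Quotient.eq (r := Equiv.Perm.SameCycle.setoid g)).symm

noncomputable instance scFintype (g : Equiv.Perm (Fin n)) :
    Fintype (Quotient (Equiv.Perm.SameCycle.setoid g)) := Fintype.ofFinite _

-- fiber of the class of `a` is the finset of `b` with `SameCycle b a`
lemma fiber_eq (g : Equiv.Perm (Fin n)) (a : Fin n) :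
    (univ.filter fun b => (Quotient.mk (Equiv.Perm.SameCycle.setoid g) b)
        = Quotient.mk _ a) = univ.filter fun b => g.SameCycle b a := by
  ext b
  simp only [mem_filter, mem_univ, true_and]
  exact Quotient.eq (r := Equiv.Perm.SameCycle.setoid g)

lemma fiber_of_fixed (g : Equiv.Perm (Fin n)) {a : Fin n} (ha : g a = a) :
    (univ.filter fun b => (Quotient.mk (Equiv.Perm.SameCycle.setoid g) b)
        = Quotient.mk _ a) = {a} := by
  rw [fiber_eq]
  ext b
  simp only [mem_filter, mem_univ, true_and, mem_singleton]
  constructor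
  · rintro hb
    obtain ⟨k, hk⟩ := hb.symm
    rw [Equiv.Perm.zpow_apply_eq_self_of_apply_eq_self ha] at hk
    exact hk.symm
  · rintro rfl; exact Equiv.Perm.SameCycle.refl _ _

lemma fiber_of_support (g : Equiv.Perm (Fin n)) {a : Fin n} (ha : g a ≠ a) :
    (univ.filter fun b => (Quotient.mk (Equiv.Perm.SameCycle.setoid g) b)
        = Quotient.mk _ a) = (g.cycleOf a).support := by
  rw [fiber_eq]
  ext b
  simp only [mem_filter, mem_univ, true_and, Equiv.Perm.mem_support_cycleOf_iff]
  constructor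
  · intro h; exact ⟨h.symm, Equiv.Perm.mem_support.2 ha⟩
  · intro h; exact h.1.symm

lemma sz_out_eq (g : Equiv.Perm (Fin n)) (c : Quotient (Equiv.Perm.SameCycle.setoid g)) :
    (univ.filter fun b => Quotient.mk (Equiv.Perm.SameCycle.setoid g) b = c)
      = (univ.filter fun b => Quotient.mk (Equiv.Perm.SameCycle.setoid g) b
          = Quotient.mk _ c.out) := by
  rw [Quotient.out_eq]

lemma count_classes (g : Equiv.Perm (Fin n)) (k : ℕ) (hk : 1 ≤ k) :
    (univ.filter fun c : Quotient (Equiv.Perm.SameCycle.setoid g) =>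
        (univ.filter fun b => Quotient.mk _ b = c).card = k).card = cycleCount g k := by
  rcases eq_or_lt_of_le hk with h1 | h2
  · -- k = 1 : singleton classes ↔ fixed points
    subst h1
    rw [cycleCount, if_pos rfl]
    refine (Finset.card_bij (fun a _ => Quotient.mk (Equiv.Perm.SameCycle.setoid g) a)
      ?_ ?_ ?_).symm
    · intro a ha
      simp only [mem_filter, mem_univ, true_and] at ha ⊢
      rw [fiber_of_fixed g ha, Finset.card_singleton]
    · intro a ha b hb hab
      simp only [mem_filter, mem_univ, true_and] at ha hb
      have : b ∈ (univ.filter fun x => Quotient.mk (Equiv.Perm.SameCycle.setoid g) x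
          = Quotient.mk _ a) := by
        simp only [mem_filter, mem_univ, true_and, hab]
      rw [fiber_of_fixed g ha, mem_singleton] at this
      exact this.symm
    · intro c hc
      simp only [mem_filter, mem_univ, true_and] at hc
      refine ⟨c.out, ?_, Quotient.out_eq c⟩
      simp only [mem_filter, mem_univ, true_and]
      -- g c.out = c.out since the class has card 1
      by_contra hne
      have hout : c.out ∈ (univ.filter fun b =>
          Quotient.mk (Equiv.Perm.SameCycle.setoid g) b = c) := by
        simp [Quotient.out_eq]
      have hgout : g c.out ∈ (univ.filter fun b =>
          Quotient.mk (Equiv.Perm.SameCycle.setoid g) b = c) := by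
        simp only [mem_filter, mem_univ, true_and]
        have : Quotient.mk (Equiv.Perm.SameCycle.setoid g) (g c.out) = Quotient.mk _ c.out :=
          Quotient.sound (Equiv.Perm.sameCycle_apply_left.2 (Equiv.Perm.SameCycle.refl _ _))
        rw [this, Quotient.out_eq]
      have := Finset.card_le_one.1 (le_of_eq hc) _ hgout _ hout
      exact hne this
  · -- k ≥ 2 : classes of size k ↔ cycle factors with support of size k
    have hk2 : k ≠ 1 := by omega
    rw [cycleCount, if_neg hk2, Equiv.Perm.cycleType_def, Multiset.count_map]
    have : Multiset.card (Multiset.filter (fun a => k = (Finset.card ∘ Equiv.Perm.support) a)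
        g.cycleFactorsFinset.val)
        = (g.cycleFactorsFinset.filter fun d => k = d.support.card).card := rfl
    rw [this]
    refine Finset.card_bij (fun c _ => g.cycleOf (Quotient.out c)) ?_ ?_ ?_
    · intro c hc
      simp only [mem_filter, mem_univ, true_and] at hc ⊢
      have hne : g c.out ≠ c.out := by
        intro hfix
        rw [sz_out_eq, fiber_of_fixed g hfix, Finset.card_singleton] at hc
        omega
      constructor
      · exact Equiv.Perm.cycleOf_mem_cycleFactorsFinset_iff.2 (Equiv.Perm.mem_support.2 hne)
      · rw [← hc, sz_out_eq, fiber_of_support g hne]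
    · intro c₁ hc₁ c₂ hc₂ h12
      simp only [mem_filter, mem_univ, true_and] at hc₁ hc₂
      have hne₁ : g c₁.out ≠ c₁.out := by
        intro hfix
        rw [sz_out_eq, fiber_of_fixed g hfix, Finset.card_singleton] at hc₁
        omega
      have hmem : c₁.out ∈ (g.cycleOf c₁.out).support :=
        Equiv.Perm.mem_support_cycleOf_iff.2
          ⟨Equiv.Perm.SameCycle.refl _ _, Equiv.Perm.mem_support.2 hne₁⟩
      rw [h12] at hmem
      have : g.SameCycle c₂.out c₁.out := (Equiv.Perm.mem_support_cycleOf_iff.1 hmem).1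
      rw [← Quotient.out_eq c₁, ← Quotient.out_eq c₂]
      exact (Quotient.sound this.symm)
    · intro d hd
      simp only [mem_filter, mem_univ, true_and] at hd
      obtain ⟨hdT, hdk⟩ := hd
      have hcyc : d.IsCycle := (Equiv.Perm.mem_cycleFactorsFinset_iff.1 hdT).1
      obtain ⟨a, ha⟩ : d.support.Nonempty := by
        rw [← Finset.card_pos, ← hdk] at *
        · omega
      have hda : d a = g a := (Equiv.Perm.mem_cycleFactorsFinset_iff.1 hdT).2 a ha
      have hga : g a ≠ a := by
        rw [← hda]; exact Equiv.Perm.mem_support.1 ha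
      have hd_eq : d = g.cycleOf a := Equiv.Perm.cycle_is_cycleOf ha hdT
      refine ⟨Quotient.mk _ a, ?_, ?_⟩
      · simp only [mem_filter, mem_univ, true_and]
        rw [fiber_of_support g hga, ← hd_eq, ← hdk]
      · have hsame : g.SameCycle (Quotient.out (Quotient.mk
            (Equiv.Perm.SameCycle.setoid g) a)) a :=
          Quotient.mk_out (s := Equiv.Perm.SameCycle.setoid g) a
        show g.cycleOf (Quotient.out (Quotient.mk (Equiv.Perm.SameCycle.setoid g) a)) = d
        rw [hsame.cycleOf_eq, ← hd_eq]

lemma smul_eq_iff_fixed (g : Equiv.Perm (Fin n)) (x : Fin n → Fin r) :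
    g • x = x ↔ ∀ a, x (g a) = x a := by
  constructor
  · intro h a
    have h1 : x (g⁻¹ (g a)) = x (g a) := congrFun h (g a)
    rw [show g⁻¹ (g a) = a from g.symm_apply_apply a] at h1
    exact h1.symm
  · intro h
    funext b
    show x (g⁻¹ b) = x b
    have h1 := h (g⁻¹ b)
    rw [show g (g⁻¹ b) = b from g.apply_symm_apply b] at h1
    exact h1.symm

lemma const_of_fixed {g : Equiv.Perm (Fin n)} {x : Fin n → Fin r}
    (h : ∀ a, x (g a) = x a) : ∀ a b, g.SameCycle a b → x a = x b := by
  have hz : ∀ (k : ℤ) (a : Fin n), x ((g ^ k) a) = x a := by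
    intro k
    induction k using Int.induction_on with
    | zero => intro a; simp
    | succ k ih =>
        intro a
        have h1 : (g ^ ((k : ℤ) + 1)) a = (g ^ (k : ℤ)) (g a) := by
          rw [zpow_add_one]; rfl
        rw [h1, ih (g a), h a]
    | pred k ih =>
        intro a
        have h1 : (g ^ (-(k : ℤ) - 1)) a = (g ^ (-(k : ℤ))) (g⁻¹ a) := by
          rw [zpow_sub_one]; rfl
        have h2 := h (g⁻¹ a)
        rw [show g (g⁻¹ a) = a from g.apply_symm_apply a] at h2
        rw [h1, ih (g⁻¹ a), ← h2]
  rintro a b ⟨k, hk⟩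
  rw [← hk]
  exact (hz k a).symm

set_option maxHeartbeats 2000000 in
lemma keyC (g : Equiv.Perm (Fin n)) :
    (∑ x ∈ univ.filter (fun x : Fin n → Fin r => g • x = x),
        ∏ a, (X (x a) : MvPolynomial (Fin r) ℚ))
      = ∏ j ∈ Finset.range n,
          (∑ i : Fin r, (X i : MvPolynomial (Fin r) ℚ) ^ (j + 1)) ^ cycleCount g (j + 1) := by
  set Q := Quotient (Equiv.Perm.SameCycle.setoid g) with hQ
  set sz : Q → ℕ := fun c => (univ.filter fun b => Quotient.mk _ b = c).card with hsz
  have hsz1 : ∀ c : Q, 1 ≤ sz c := by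
    intro c
    refine Finset.card_pos.2 ⟨c.out, ?_⟩
    simp [hsz, Quotient.out_eq]
  have hszn : ∀ c : Q, sz c ≤ n := by
    intro c
    calc sz c ≤ Finset.univ.card := Finset.card_filter_le _ _
      _ = n := by rw [Finset.card_univ, Fintype.card_fin]
  calc (∑ x ∈ univ.filter (fun x : Fin n → Fin r => g • x = x),
        ∏ a, (X (x a) : MvPolynomial (Fin r) ℚ))
      = ∑ f : Q → Fin r, ∏ c : Q, (X (f c) : MvPolynomial (Fin r) ℚ) ^ sz c := by
        refine Finset.sum_bij' (fun x _ => fun c : Q => x c.out)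
          (fun f _ => fun a => f (Quotient.mk _ a)) ?_ ?_ ?_ ?_ ?_
        · intro x hx; exact Finset.mem_univ _
        · intro f _
          simp only [Finset.mem_filter, Finset.mem_univ, true_and]
          rw [smul_eq_iff_fixed]
          intro a
          have : Quotient.mk (Equiv.Perm.SameCycle.setoid g) (g a) = Quotient.mk _ a :=
            Quotient.sound (Equiv.Perm.sameCycle_apply_left.2 (Equiv.Perm.SameCycle.refl _ _))
          rw [this]
        · intro x hx
          simp only [Finset.mem_filter, Finset.mem_univ, true_and] at hx
          funext a
          exact const_of_fixed ((smul_eq_iff_fixed g x).1 hx) _ a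
            (Quotient.mk_out (s := Equiv.Perm.SameCycle.setoid g) a)
        · intro f _
          dsimp only
          funext c
          exact congrArg f (Quotient.out_eq c)
        · intro x hx
          simp only [Finset.mem_filter, Finset.mem_univ, true_and] at hx
          rw [← Finset.prod_fiberwise univ (fun a => Quotient.mk
              (Equiv.Perm.SameCycle.setoid g) a) (fun a => (X (x a) : MvPolynomial (Fin r) ℚ))]
          refine Finset.prod_congr rfl fun c _ => ?_
          have hc : ∀ a ∈ univ.filter (fun a => Quotient.mk
              (Equiv.Perm.SameCycle.setoid g) a = c), x a = x c.out := by
            intro a ha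
            simp only [Finset.mem_filter, Finset.mem_univ, true_and] at ha
            refine const_of_fixed ((smul_eq_iff_fixed g x).1 hx) a c.out ?_
            have : Quotient.mk (Equiv.Perm.SameCycle.setoid g) a = Quotient.mk _ c.out := by
              rw [ha, Quotient.out_eq]
            exact Quotient.eq (r := Equiv.Perm.SameCycle.setoid g) |>.1 this
          calc ∏ a ∈ univ.filter (fun a => Quotient.mk
                (Equiv.Perm.SameCycle.setoid g) a = c), (X (x a) : MvPolynomial (Fin r) ℚ)
              = ∏ _a ∈ univ.filter (fun a => Quotient.mk
                (Equiv.Perm.SameCycle.setoid g) a = c), (X (x c.out) : MvPolynomial (Fin r) ℚ) :=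
                Finset.prod_congr rfl fun a ha => by rw [hc a ha]
            _ = (X (x c.out) : MvPolynomial (Fin r) ℚ) ^ sz c := by
                rw [Finset.prod_const]
    _ = ∏ c : Q, ∑ i : Fin r, (X i : MvPolynomial (Fin r) ℚ) ^ sz c := by
        have h := Finset.prod_univ_sum (fun _ : Q => (univ : Finset (Fin r)))
          (fun c i => (X i : MvPolynomial (Fin r) ℚ) ^ sz c)
        rw [Fintype.piFinset_univ] at h
        exact h.symm
    _ = ∏ j ∈ Finset.range n,
          (∑ i : Fin r, (X i : MvPolynomial (Fin r) ℚ) ^ (j + 1)) ^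
            (univ.filter fun c : Q => sz c = j + 1).card := by
        rw [← Finset.prod_fiberwise_of_maps_to (g := fun c : Q => sz c - 1) (t := Finset.range n)
          (fun c _ => Finset.mem_range.2 (by
            show sz c - 1 < n
            have := hsz1 c; have := hszn c; omega))
          (fun c => ∑ i : Fin r, (X i : MvPolynomial (Fin r) ℚ) ^ sz c)]
        refine Finset.prod_congr rfl fun j _ => ?_
        have hfil : (univ.filter fun c : Q => sz c - 1 = j)
            = univ.filter fun c : Q => sz c = j + 1 := by
          ext c
          simp only [Finset.mem_filter, Finset.mem_univ, true_and]
          have := hsz1 c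
          omega
        rw [hfil]
        calc (∏ c ∈ univ.filter fun c : Q => sz c = j + 1,
              ∑ i : Fin r, (X i : MvPolynomial (Fin r) ℚ) ^ sz c)
            = ∏ _c ∈ univ.filter fun c : Q => sz c = j + 1,
              ∑ i : Fin r, (X i : MvPolynomial (Fin r) ℚ) ^ (j + 1) := by
              refine Finset.prod_congr rfl fun c hc => ?_
              simp only [Finset.mem_filter, Finset.mem_univ, true_and] at hc
              rw [hc]
          _ = _ := Finset.prod_const _
    _ = ∏ j ∈ Finset.range n,
          (∑ i : Fin r, (X i : MvPolynomial (Fin r) ℚ) ^ (j + 1)) ^ cycleCount g (j + 1) := by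
        refine Finset.prod_congr rfl fun j _ => ?_
        rw [count_classes g (j + 1) (by omega)]

end PolyaAux

/-- Pólya enumeration theorem: with colors `X = Fin r` and `G ≤ S_n` acting on `X^n` by
permuting coordinates, summing over the orbits the monomial `t_1^{k_1} ⋯ t_r^{k_r}`
recording the color multiplicities (of any representative, here `Quotient.out`) gives
`Z_G(p_1, …, p_n)`, where `p_j = t_1^j + ⋯ + t_r^j`. -/
theorem stmt_11 {n r : ℕ} (G : Subgroup (Equiv.Perm (Fin n))) :
    (∑ᶠ c : Quotient (MulAction.orbitRel G (Fin n → Fin r)),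
        ∏ i : Fin r, (X i : MvPolynomial (Fin r) ℚ) ^
          (Finset.univ.filter fun j : Fin n => Quotient.out c j = i).card) =
      (Nat.card G : ℚ)⁻¹ •
        ∑ᶠ g : G, ∏ j ∈ Finset.range n,
          (∑ i : Fin r, (X i : MvPolynomial (Fin r) ℚ) ^ (j + 1)) ^
            cycleCount (g : Equiv.Perm (Fin n)) (j + 1) := by
  classical
  letI fQ : Fintype (Quotient (MulAction.orbitRel G (Fin n → Fin r))) := Fintype.ofFinite _
  letI fG : Fintype G := Fintype.ofFinite _
  rw [finsum_eq_sum_of_fintype, finsum_eq_sum_of_fintype]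
  have hw : ∀ (g : G) (x : Fin n → Fin r),
      (∏ a, (X ((g • x) a) : MvPolynomial (Fin r) ℚ)) = ∏ a, X (x a) := by
    intro g x
    show ∏ a, (X ((x ∘ ⇑((g : Equiv.Perm (Fin n)))⁻¹) a) : MvPolynomial (Fin r) ℚ)
      = ∏ a, X (x a)
    exact Equiv.prod_comp ((g : Equiv.Perm (Fin n)))⁻¹ (fun a => X (x a))
  have hb := burnside (G := G) (α := Fin n → Fin r)
    (w := fun x => ∏ a, (X (x a) : MvPolynomial (Fin r) ℚ)) hw
  have hne : (Nat.card G : ℚ) ≠ 0 := Nat.cast_ne_zero.2 Nat.card_pos.ne'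
  calc (∑ c : Quotient (MulAction.orbitRel G (Fin n → Fin r)),
        ∏ i : Fin r, (X i : MvPolynomial (Fin r) ℚ) ^
          (Finset.univ.filter fun j : Fin n => Quotient.out c j = i).card)
      = ∑ c : Quotient (MulAction.orbitRel G (Fin n → Fin r)),
          ∏ a : Fin n, (X (Quotient.out c a) : MvPolynomial (Fin r) ℚ) := by
        refine Finset.sum_congr rfl fun c _ => ?_
        have h := Finset.prod_fiberwise_of_maps_to' (s := (Finset.univ : Finset (Fin n)))
          (t := (Finset.univ : Finset (Fin r))) (g := fun j => Quotient.out c j)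
          (fun _ _ => Finset.mem_univ _) (fun i => (X i : MvPolynomial (Fin r) ℚ))
        rw [← h]
        refine Finset.prod_congr rfl fun i _ => ?_
        rw [Finset.prod_const]
    _ = (Nat.card G : ℚ)⁻¹ • ((Nat.card G : ℚ) •
          ∑ c : Quotient (MulAction.orbitRel G (Fin n → Fin r)),
          ∏ a : Fin n, (X (Quotient.out c a) : MvPolynomial (Fin r) ℚ)) := by
        rw [smul_smul, inv_mul_cancel₀ hne, one_smul]
    _ = (Nat.card G : ℚ)⁻¹ • ∑ g : G,
          ∑ x ∈ Finset.univ.filter (fun x : Fin n → Fin r => g • x = x),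
            ∏ a, (X (x a) : MvPolynomial (Fin r) ℚ) := by
        congr 1
        exact hb.symm
    _ = (Nat.card G : ℚ)⁻¹ • ∑ g : G, ∏ j ∈ Finset.range n,
          (∑ i : Fin r, (X i : MvPolynomial (Fin r) ℚ) ^ (j + 1)) ^
            cycleCount (g : Equiv.Perm (Fin n)) (j + 1) := by
        congr 1
        exact Finset.sum_congr rfl fun g _ => keyC (g : Equiv.Perm (Fin n))
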